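/- arXiv:1112.0693 — 2 statements merged into one kernel-verified Lean document; each statement's English description precedes it below -/
import Mathlib

section
/- Let β > 0 be a real number and p ≥ 1 an integer. Then the generalized binomial coefficient satisfies |C(β,p)| ≤ e^{β²+β} / p^{β+1}, where C(β,p) = β(β−1)⋯(β−p+1)/p! = Γ(β+1)/(Γ(β−p+1)·p!). -/
open Real

lemma aux_abs_le_exp (x : ℝ) (hx : 0 ≤ x) : |x - 1| ≤ Real.exp (x ^ 2 / 2 - x) := by
  rcases le_total x 1 with h | h
  · rw [abs_sub_comm, abs_of_nonneg (by linarith)]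
    calc 1 - x ≤ Real.exp (-x) := by linarith [Real.add_one_le_exp (-x)]
      _ ≤ Real.exp (x ^ 2 / 2 - x) := Real.exp_le_exp.2 (by nlinarith)
  · rw [abs_of_nonneg (by linarith)]
    calc x - 1 ≤ Real.exp (x - 2) := by linarith [Real.add_one_le_exp (x - 2)]
      _ ≤ Real.exp (x ^ 2 / 2 - x) := Real.exp_le_exp.2 (by nlinarith [sq_nonneg (x - 2)])

lemma aux_harmonic (n : ℕ) :
    Real.log (n + 1) ≤ ∑ i ∈ Finset.range n, 1 / ((i : ℝ) + 1) := by
  induction n with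
  | zero => simp
  | succ n ih =>
    rw [Finset.sum_range_succ]
    have h1 : (0:ℝ) < n + 1 := by positivity
    have h2 : (0:ℝ) < ((n:ℝ) + 1 + 1) / ((n:ℝ) + 1) := by positivity
    have hlog : Real.log (((n:ℝ) + 1 + 1) / ((n:ℝ) + 1)) ≤ 1 / ((n:ℝ) + 1) := by
      have := Real.log_le_sub_one_of_pos h2
      have heq : ((n:ℝ) + 1 + 1) / ((n:ℝ) + 1) - 1 = 1 / ((n:ℝ) + 1) := by
        field_simp; ring
      linarith
    have hsplit : Real.log ((n:ℝ) + 1 + 1) =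
        Real.log ((n:ℝ) + 1) + Real.log (((n:ℝ) + 1 + 1) / ((n:ℝ) + 1)) := by
      rw [Real.log_div (by positivity) (by positivity)]; ring
    push_cast
    push_cast at ih
    linarith

lemma aux_basel (n : ℕ) : ∑ i ∈ Finset.range n, 1 / ((i : ℝ) + 1) ^ 2 ≤ 2 := by
  have key : ∀ m : ℕ, 1 ≤ m → ∑ i ∈ Finset.range m, 1 / ((i : ℝ) + 1) ^ 2 ≤ 2 - 1 / (m:ℝ) := by
    intro m hm
    induction m, hm using Nat.le_induction with
    | base => norm_num
    | succ m hm ih =>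
      rw [Finset.sum_range_succ]
      have h1 : (0:ℝ) < (m:ℝ) := by exact_mod_cast hm
      have h2 : 1 / ((m:ℝ) + 1) ^ 2 ≤ 1 / (m:ℝ) - 1 / ((m:ℝ) + 1) := by
        rw [div_sub_div _ _ (ne_of_gt h1) (by positivity),
          div_le_div_iff₀ (by positivity) (by positivity)]
        nlinarith
      have hc : ((m + 1 : ℕ) : ℝ) = (m:ℝ) + 1 := by push_cast; ring
      rw [hc]
      linarith
  rcases Nat.eq_zero_or_pos n with rfl | hn
  · simp
  · have h := key n hn
    have h0 : (0:ℝ) < (n:ℝ) := by exact_mod_cast hn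
    have hpos : (0:ℝ) ≤ 1 / (n:ℝ) := by positivity
    linarith

/-- Bound on the generalized binomial coefficient:
`|C(β,p)| = |β(β-1)⋯(β-p+1)/p!| ≤ e^{β²+β}/p^{β+1}` for `β > 0` and `p ≥ 1`. -/
theorem abs_generalized_binomial_le
    (β : ℝ) (hβ : 0 < β) (p : ℕ) (hp : 1 ≤ p) :
    |(∏ j ∈ Finset.range p, (β - j)) / (Nat.factorial p)| ≤
      Real.exp (β ^ 2 + β) / (p : ℝ) ^ (β + 1) := by
  obtain ⟨q, rfl⟩ : ∃ q, p = q + 1 := ⟨p - 1, (Nat.succ_pred_eq_of_pos hp).symm⟩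
  have hq1 : (0:ℝ) < (q:ℝ) + 1 := by positivity
  -- factor the numerator
  have hnum : (∏ j ∈ Finset.range (q + 1), (β - j)) =
      (∏ i ∈ Finset.range q, (β - ((i:ℝ) + 1))) * β := by
    rw [Finset.prod_range_succ']
    push_cast
    rw [sub_zero]
  -- factor the factorial
  have hfact : ((Nat.factorial (q + 1) : ℕ) : ℝ) =
      ((q:ℝ) + 1) * ∏ i ∈ Finset.range q, ((i:ℝ) + 1) := by
    rw [Nat.factorial_succ, ← Finset.prod_range_add_one_eq_factorial]
    push_cast
    ring
  have hfactpos : (0:ℝ) < ∏ i ∈ Finset.range q, ((i:ℝ) + 1) :=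
    Finset.prod_pos fun i _ => by positivity
  -- rewrite LHS as (β/(q+1)) * ∏ |β/(i+1) - 1|
  have hLHS : |(∏ j ∈ Finset.range (q + 1), (β - j)) / (Nat.factorial (q + 1))| =
      (β / ((q:ℝ) + 1)) * ∏ i ∈ Finset.range q, |β / ((i:ℝ) + 1) - 1| := by
    rw [hnum, abs_div, hfact, abs_mul, Finset.abs_prod,
      abs_of_pos (by positivity : (0:ℝ) < ((q:ℝ) + 1) * ∏ i ∈ Finset.range q, ((i:ℝ) + 1)),
      abs_of_pos hβ]
    have hterm : ∀ i ∈ Finset.range q, |β / ((i:ℝ) + 1) - 1| = |β - ((i:ℝ) + 1)| / ((i:ℝ) + 1) := by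
      intro i _
      have hi : (0:ℝ) < (i:ℝ) + 1 := by positivity
      rw [div_sub_one (ne_of_gt hi), abs_div, abs_of_pos hi]
    rw [Finset.prod_congr rfl hterm, Finset.prod_div_distrib]
    field_simp
  rw [hLHS]
  -- bound the product
  have hprod : ∏ i ∈ Finset.range q, |β / ((i:ℝ) + 1) - 1| ≤
      Real.exp (β ^ 2 - β * Real.log ((q:ℝ) + 1)) := by
    calc ∏ i ∈ Finset.range q, |β / ((i:ℝ) + 1) - 1|
        ≤ ∏ i ∈ Finset.range q, Real.exp ((β / ((i:ℝ) + 1)) ^ 2 / 2 - β / ((i:ℝ) + 1)) := by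
          apply Finset.prod_le_prod (fun i _ => abs_nonneg _)
          intro i _
          exact aux_abs_le_exp _ (by positivity)
      _ = Real.exp (∑ i ∈ Finset.range q, ((β / ((i:ℝ) + 1)) ^ 2 / 2 - β / ((i:ℝ) + 1))) := by
          rw [Real.exp_sum]
      _ ≤ Real.exp (β ^ 2 - β * Real.log ((q:ℝ) + 1)) := by
          apply Real.exp_le_exp.2
          rw [Finset.sum_sub_distrib]
          have h1 : ∑ i ∈ Finset.range q, (β / ((i:ℝ) + 1)) ^ 2 / 2 ≤ β ^ 2 := by
            have : ∀ i ∈ Finset.range q,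
                (β / ((i:ℝ) + 1)) ^ 2 / 2 = (β ^ 2 / 2) * (1 / ((i:ℝ) + 1) ^ 2) := by
              intro i _; field_simp
            rw [Finset.sum_congr rfl this, ← Finset.mul_sum]
            have := aux_basel q
            nlinarith [sq_nonneg β]
          have h2 : β * Real.log ((q:ℝ) + 1) ≤ ∑ i ∈ Finset.range q, β / ((i:ℝ) + 1) := by
            have : ∀ i ∈ Finset.range q, β / ((i:ℝ) + 1) = β * (1 / ((i:ℝ) + 1)) := by
              intro i _; ring
            rw [Finset.sum_congr rfl this, ← Finset.mul_sum]
            have := aux_harmonic q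
            push_cast at this
            nlinarith
          linarith
  have hβexp : β ≤ Real.exp β := by
    linarith [Real.add_one_le_exp β]
  have hrpow : ((q:ℝ) + 1) ^ (β + 1) = ((q:ℝ) + 1) ^ β * ((q:ℝ) + 1) := by
    rw [Real.rpow_add hq1, Real.rpow_one]
  have hexplog : Real.exp (β ^ 2 - β * Real.log ((q:ℝ) + 1)) =
      Real.exp (β ^ 2) / ((q:ℝ) + 1) ^ β := by
    rw [Real.exp_sub]
    congr 1
    rw [← Real.log_rpow hq1, Real.exp_log (by positivity)]
  have hprodnn : (0:ℝ) ≤ ∏ i ∈ Finset.range q, |β / ((i:ℝ) + 1) - 1| :=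
    Finset.prod_nonneg fun i _ => abs_nonneg _
  push_cast
  calc β / ((q:ℝ) + 1) * ∏ i ∈ Finset.range q, |β / ((i:ℝ) + 1) - 1|
      ≤ β / ((q:ℝ) + 1) * (Real.exp (β ^ 2) / ((q:ℝ) + 1) ^ β) := by
        rw [← hexplog]
        exact mul_le_mul_of_nonneg_left hprod (by positivity)
    _ ≤ Real.exp β / ((q:ℝ) + 1) * (Real.exp (β ^ 2) / ((q:ℝ) + 1) ^ β) := by
        apply mul_le_mul_of_nonneg_right _ (by positivity)
        gcongr
    _ = Real.exp (β ^ 2 + β) / ((q:ℝ) + 1) ^ (β + 1) := by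
        rw [div_mul_div_comm, Real.exp_add, hrpow]
        ring
end

section
/- Let β > 0 be a real number and N ≥ 1 an integer. Then the tail of the series of absolute values of generalized binomial coefficients satisfies Σ_{p=N+1}^{∞} |C(β,p)| ≤ e^{β²+β} / (β·N^{β}), where C(β,p) = β(β−1)⋯(β−p+1)/p!. -/
open Real

noncomputable def binAbs (β : ℝ) (p : ℕ) : ℝ :=
  |∏ j ∈ Finset.range p, (β - j)| / (Nat.factorial p)

lemma binAbs_nonneg (β : ℝ) (p : ℕ) : 0 ≤ binAbs β p := by
  unfold binAbs; positivity

lemma binAbs_succ (β : ℝ) (p : ℕ) :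
    binAbs β (p + 1) = binAbs β p * |β - p| / (p + 1) := by
  unfold binAbs
  rw [Finset.prod_range_succ, abs_mul, Nat.factorial_succ]
  have h1 : (Nat.factorial p : ℝ) ≠ 0 := by positivity
  have h2 : ((p:ℝ) + 1) ≠ 0 := by positivity
  push_cast
  rw [div_mul_eq_mul_div, div_div, mul_comm ((p:ℝ)+1)]

lemma abs_one_sub_le (x : ℝ) : |1 - x| ≤ Real.exp ((4/7) * x ^ 2 - x) := by
  rcases le_total x 1 with h | h
  · rw [abs_of_nonneg (by linarith)]
    calc 1 - x ≤ Real.exp (-x) := by linarith [Real.add_one_le_exp (-x)]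
    _ ≤ Real.exp ((4/7) * x ^ 2 - x) := by
        apply Real.exp_le_exp.2; nlinarith [sq_nonneg x]
  · rw [abs_of_nonpos (by linarith)]
    calc -(1 - x) = (x - 2) + 1 := by ring
    _ ≤ Real.exp (x - 2) := Real.add_one_le_exp _
    _ ≤ Real.exp ((4/7) * x ^ 2 - x) := by
        apply Real.exp_le_exp.2; nlinarith [sq_nonneg (x - 7/4)]

lemma sum_inv_sq_le : ∀ N : ℕ, ∑ j ∈ Finset.range N, (1 : ℝ) / ((j:ℝ) + 1) ^ 2 ≤ 7/4 := by
  have key : ∀ n : ℕ, ∑ j ∈ Finset.range (n + 2), (1 : ℝ) / ((j:ℝ) + 1) ^ 2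
      ≤ 7/4 - 1 / ((n:ℝ) + 2) := by
    intro n
    induction n with
    | zero => norm_num [Finset.sum_range_succ]
    | succ m ih =>
      rw [Finset.sum_range_succ]
      have h1 : (0:ℝ) < (m:ℝ) + 2 := by positivity
      have h2 : (0:ℝ) < (m:ℝ) + 3 := by positivity
      have hstep : (1:ℝ) / (((m + 2 : ℕ):ℝ) + 1) ^ 2 ≤ 1 / ((m:ℝ) + 2) - 1 / ((m:ℝ) + 3) := by
        push_cast
        rw [div_sub_div _ _ (ne_of_gt h1) (ne_of_gt h2), div_le_div_iff₀ (by positivity) (by positivity)]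
        nlinarith
      have hc : ((m + 1 : ℕ):ℝ) + 2 = (m:ℝ) + 3 := by push_cast; ring
      rw [hc]
      linarith
  intro N
  match N with
  | 0 => norm_num
  | 1 => norm_num
  | (n + 2) =>
    have h := key n
    have h2 : (0:ℝ) ≤ 1 / ((n:ℝ) + 2) := by positivity
    linarith

lemma log_le_harmonic : ∀ N : ℕ, Real.log ((N:ℝ) + 1) ≤ ∑ j ∈ Finset.range N, (1 : ℝ) / ((j:ℝ) + 1) := by
  intro N
  induction N with
  | zero => simp
  | succ m ih =>
    rw [Finset.sum_range_succ]
    have h1 : (0:ℝ) < (m:ℝ) + 1 := by positivity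
    have h2 : (0:ℝ) < ((m:ℝ) + 2) / ((m:ℝ) + 1) := by positivity
    have hlog : Real.log (((m:ℝ) + 2) / ((m:ℝ) + 1)) ≤ 1 / ((m:ℝ) + 1) := by
      have := Real.log_le_sub_one_of_pos h2
      have heq : ((m:ℝ) + 2) / ((m:ℝ) + 1) - 1 = 1 / ((m:ℝ) + 1) := by
        field_simp
        norm_num
      linarith
    have hsplit : Real.log ((m:ℝ) + 2) = Real.log ((m:ℝ) + 1) + Real.log (((m:ℝ)+2)/((m:ℝ)+1)) := by
      rw [← Real.log_mul (ne_of_gt h1) (ne_of_gt h2)]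
      congr 1
      field_simp
    have hc : ((m + 1 : ℕ):ℝ) + 1 = (m:ℝ) + 2 := by push_cast; ring
    rw [hc, hsplit]
    linarith

/-- The key single-value bound: `N^β * ((N+1) * binAbs β (N+1)) ≤ exp (β² + β)`. -/
lemma binAbs_val_bound (β : ℝ) (hβ : 0 < β) (N : ℕ) (hN : 1 ≤ N) :
    (N : ℝ) ^ β * (((N:ℝ) + 1) * binAbs β (N + 1)) ≤ Real.exp (β ^ 2 + β) := by
  have hNpos : (0:ℝ) < N := by exact_mod_cast hN
  have step1 : ((N:ℝ) + 1) * binAbs β (N + 1)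
      = β * ∏ j ∈ Finset.range N, (|β - ((j:ℝ) + 1)| / ((j:ℝ) + 1)) := by
    unfold binAbs
    rw [Finset.prod_range_succ', Nat.factorial_succ, abs_mul]
    have hfac : (0:ℝ) < (Nat.factorial N : ℝ) := by positivity
    rw [Finset.prod_div_distrib]
    have hden : ∏ j ∈ Finset.range N, ((j:ℝ) + 1) = (Nat.factorial N : ℝ) := by
      rw [← Finset.prod_range_add_one_eq_factorial N]
      push_cast
      rfl
    rw [hden, Finset.abs_prod]
    have habsβ : |β - ((0:ℕ):ℝ)| = β := by simp [abs_of_pos hβ]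
    rw [habsβ]
    have hprodc : ∏ i ∈ Finset.range N, |β - ((i+1 : ℕ):ℝ)|
        = ∏ j ∈ Finset.range N, |β - ((j:ℝ) + 1)| := by
      apply Finset.prod_congr rfl; intro j _; push_cast; ring_nf
    rw [hprodc]
    push_cast
    field_simp
  rw [step1]
  have hprod : ∏ j ∈ Finset.range N, (|β - ((j:ℝ) + 1)| / ((j:ℝ) + 1))
      ≤ Real.exp (∑ j ∈ Finset.range N, ((4/7) * (β/((j:ℝ)+1))^2 - β/((j:ℝ)+1))) := by
    rw [Real.exp_sum]
    apply Finset.prod_le_prod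
    · intro j _; positivity
    · intro j _
      have hc : (0:ℝ) < (j:ℝ) + 1 := by positivity
      have h1 : |β - ((j:ℝ)+1)| / ((j:ℝ)+1) = |1 - β/((j:ℝ)+1)| := by
        calc |β - ((j:ℝ)+1)| / ((j:ℝ)+1) = |(β - ((j:ℝ)+1)) / ((j:ℝ)+1)| := by
              rw [abs_div, abs_of_pos hc]
        _ = |1 - β/((j:ℝ)+1)| := by
              rw [show (β - ((j:ℝ)+1)) / ((j:ℝ)+1) = -(1 - β/((j:ℝ)+1)) by field_simp; ring, abs_neg]
      rw [h1]
      exact abs_one_sub_le _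
  have hsum : ∑ j ∈ Finset.range N, ((4/7) * (β/((j:ℝ)+1))^2 - β/((j:ℝ)+1))
      ≤ β^2 - β * Real.log N := by
    have hre : ∑ j ∈ Finset.range N, ((4/7) * (β/((j:ℝ)+1))^2 - β/((j:ℝ)+1))
        = (4/7) * β^2 * (∑ j ∈ Finset.range N, 1/((j:ℝ)+1)^2)
          - β * (∑ j ∈ Finset.range N, 1/((j:ℝ)+1)) := by
      rw [Finset.mul_sum, Finset.mul_sum, ← Finset.sum_sub_distrib]
      apply Finset.sum_congr rfl; intro j _
      have hc : ((j:ℝ) + 1) ≠ 0 := by positivity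
      field_simp
    rw [hre]
    have h2 := sum_inv_sq_le N
    have h3 := log_le_harmonic N
    have hlogN : Real.log N ≤ Real.log ((N:ℝ)+1) :=
      Real.log_le_log hNpos (by linarith)
    have hq1 : (4/7) * β^2 * (∑ j ∈ Finset.range N, 1/((j:ℝ)+1)^2) ≤ (4/7) * β^2 * (7/4) :=
      mul_le_mul_of_nonneg_left h2 (by positivity)
    have hq2 : β * Real.log N ≤ β * (∑ j ∈ Finset.range N, 1/((j:ℝ)+1)) :=
      mul_le_mul_of_nonneg_left (hlogN.trans h3) hβ.le
    nlinarith
  have hmain : β * ∏ j ∈ Finset.range N, (|β - ((j:ℝ) + 1)| / ((j:ℝ) + 1))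
      ≤ β * Real.exp (β^2 - β * Real.log N) :=
    mul_le_mul_of_nonneg_left (hprod.trans (Real.exp_le_exp.2 hsum)) hβ.le
  calc (N:ℝ)^β * (β * ∏ j ∈ Finset.range N, (|β - ((j:ℝ) + 1)| / ((j:ℝ) + 1)))
      ≤ (N:ℝ)^β * (β * Real.exp (β^2 - β * Real.log N)) :=
        mul_le_mul_of_nonneg_left hmain (by positivity)
  _ = β * Real.exp (β^2) := by
      have harg : Real.log N * β + (β^2 - β * Real.log N) = β^2 := by ring
      rw [Real.rpow_def_of_pos hNpos, mul_left_comm, ← Real.exp_add, harg]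
  _ ≤ Real.exp (β^2 + β) := by
      rw [Real.exp_add]
      have h := Real.add_one_le_exp β
      have h2 : (0:ℝ) < Real.exp (β^2) := Real.exp_pos _
      nlinarith

lemma binAbs_telescope (β : ℝ) (q : ℕ) (hq : β ≤ q) :
    ∀ n : ℕ, ∑ k ∈ Finset.range n, β * binAbs β (q + k)
      = (q:ℝ) * binAbs β q - ((q:ℝ) + n) * binAbs β (q + n) := by
  intro n
  induction n with
  | zero => simp
  | succ m ih =>
    rw [Finset.sum_range_succ, ih]
    have hrec := binAbs_succ β (q + m)
    have habs : |β - ((q + m : ℕ):ℝ)| = ((q + m : ℕ):ℝ) - β := by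
      rw [abs_of_nonpos]
      · ring
      · have : (q:ℝ) ≤ ((q + m : ℕ):ℝ) := by push_cast; linarith [Nat.cast_nonneg (α := ℝ) m]
        linarith
    have key : ((q:ℝ) + ((m:ℝ)+1)) * binAbs β (q + (m+1))
        = ((q:ℝ) + m) * binAbs β (q + m) - β * binAbs β (q + m) := by
      have hstep : q + (m + 1) = (q + m) + 1 := by omega
      rw [hstep, hrec, habs]
      have hpos : ((q + m : ℕ):ℝ) + 1 ≠ 0 := by positivity
      push_cast at hpos ⊢
      field_simp
      ring
    push_cast at key ⊢
    linarith

lemma binAbs_tail_sum_le (β : ℝ) (hβ : 0 < β) (q : ℕ) (hq : β ≤ q) (n : ℕ) :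
    ∑ k ∈ Finset.range n, binAbs β (q + k) ≤ (q:ℝ) * binAbs β q / β := by
  have h := binAbs_telescope β q hq n
  rw [← Finset.mul_sum] at h
  have h3 : 0 ≤ ((q:ℝ) + n) * binAbs β (q + n) := by
    have := binAbs_nonneg β (q + n)
    positivity
  rw [le_div_iff₀ hβ]
  nlinarith

lemma binAbs_le_pow_div_factorial (β : ℝ) (hβ : 0 < β) (p : ℕ) (hp : ∀ j : ℕ, j < p → (j:ℝ) < β) :
    binAbs β p ≤ β ^ p / (Nat.factorial p) := by
  unfold binAbs
  have hfac : (0:ℝ) < (Nat.factorial p : ℝ) := by positivity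
  have hnum : |∏ j ∈ Finset.range p, (β - (j:ℝ))| ≤ β ^ p := by
    rw [Finset.abs_prod]
    calc ∏ j ∈ Finset.range p, |β - (j:ℝ)| ≤ ∏ _j ∈ Finset.range p, β := by
          apply Finset.prod_le_prod (fun j _ => abs_nonneg _)
          intro j hj
          have hjβ := hp j (Finset.mem_range.1 hj)
          have hj0 : (0:ℝ) ≤ (j:ℝ) := Nat.cast_nonneg j
          rw [abs_of_nonneg (by linarith)]
          linarith
    _ = β ^ p := by rw [Finset.prod_const, Finset.card_range]
  gcongr

lemma my_pow_div_factorial_le_exp (β : ℝ) (hβ : 0 ≤ β) (m : ℕ) :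
    β ^ m / (Nat.factorial m) ≤ Real.exp β := by
  have h1 : β ^ m / (Nat.factorial m) ≤ ∑ i ∈ Finset.range (m+1), β ^ i / (Nat.factorial i) := by
    apply Finset.single_le_sum (f := fun i => β ^ i / (Nat.factorial i))
    · intro i _; positivity
    · exact Finset.self_mem_range_succ m
  exact h1.trans (Real.sum_le_exp_of_nonneg hβ (m+1))

lemma partial_sum_le (β : ℝ) (hβ : 0 < β) (N : ℕ) (hN : 1 ≤ N) (n : ℕ) :
    ∑ k ∈ Finset.range n, binAbs β (N + 1 + k)
      ≤ Real.exp (β ^ 2 + β) / (β * (N : ℝ) ^ β) := by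
  have hNpos : (0:ℝ) < N := by exact_mod_cast hN
  have hNβpos : (0:ℝ) < (N:ℝ) ^ β := Real.rpow_pos_of_pos hNpos β
  rcases le_or_gt β ((N:ℝ) + 1) with hA | hB
  · -- Case A : β ≤ N + 1, telescope from N+1
    have hq : β ≤ ((N + 1 : ℕ):ℝ) := by push_cast; linarith
    have h1 := binAbs_tail_sum_le β hβ (N+1) hq n
    have h2 := binAbs_val_bound β hβ N hN
    rw [le_div_iff₀ (by positivity)]
    rw [le_div_iff₀ hβ] at h1
    have hcast : ((N + 1 : ℕ):ℝ) = (N:ℝ) + 1 := by push_cast; ring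
    rw [hcast] at h1
    have hs : 0 ≤ ∑ k ∈ Finset.range n, binAbs β (N + 1 + k) :=
      Finset.sum_nonneg (fun k _ => binAbs_nonneg β _)
    nlinarith
  · -- Case B : β > N + 1
    set K := ⌈β⌉₊ with hK
    have hKβ : β ≤ (K:ℝ) := Nat.le_ceil β
    have hKlt : (K:ℝ) < β + 1 := by
      exact_mod_cast Nat.ceil_lt_add_one hβ.le
    have hNK : N + 1 ≤ K := by
      have : ((N + 1 : ℕ):ℝ) < (K:ℝ) := by push_cast; linarith
      exact_mod_cast this.le
    have hstep1 : ∑ k ∈ Finset.range n, binAbs β (N + 1 + k)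
        ≤ ∑ p ∈ Finset.range (K + n), binAbs β p := by
      have he : ∑ k ∈ Finset.range n, binAbs β (N + 1 + k)
          = ∑ p ∈ Finset.Ico (N+1) (N+1+n), binAbs β p := by
        rw [Finset.sum_Ico_eq_sum_range]
        simp
      rw [he]
      apply Finset.sum_le_sum_of_subset_of_nonneg
      · intro x hx
        rw [Finset.mem_Ico] at hx
        rw [Finset.mem_range]
        omega
      · intro i _ _; exact binAbs_nonneg β i
    have hsplit : ∑ p ∈ Finset.range (K + n), binAbs β p
        = ∑ p ∈ Finset.range K, binAbs β p + ∑ k ∈ Finset.range n, binAbs β (K + k) :=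
      Finset.sum_range_add _ K n
    have hKjβ : ∀ j : ℕ, j < K → (j:ℝ) < β := by
      intro j hj
      have : (j:ℝ) ≤ (K:ℝ) - 1 := by
        have : ((j:ℕ):ℝ) + 1 ≤ (K:ℝ) := by exact_mod_cast hj
        linarith
      linarith
    have hfirst : ∑ p ∈ Finset.range K, binAbs β p ≤ Real.exp β := by
      calc ∑ p ∈ Finset.range K, binAbs β p
          ≤ ∑ p ∈ Finset.range K, β ^ p / (Nat.factorial p) := by
            apply Finset.sum_le_sum
            intro p hp
            exact binAbs_le_pow_div_factorial β hβ p
              (fun j hj => hKjβ j (lt_trans hj (Finset.mem_range.1 hp)))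
      _ ≤ Real.exp β := Real.sum_le_exp_of_nonneg hβ.le K
    have hKpos : 1 ≤ K := by
      have : (0:ℝ) < (K:ℝ) := lt_of_lt_of_le hβ hKβ
      exact_mod_cast Nat.one_le_iff_ne_zero.2 (by positivity)
    obtain ⟨m, hm⟩ : ∃ m, K = m + 1 := ⟨K - 1, by omega⟩
    have hsecond : ∑ k ∈ Finset.range n, binAbs β (K + k) ≤ Real.exp β := by
      have h1 := binAbs_tail_sum_le β hβ K hKβ n
      have hAK : binAbs β K ≤ β ^ K / (Nat.factorial K) :=
        binAbs_le_pow_div_factorial β hβ K hKjβ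
      have hAK' : binAbs β (m+1) ≤ β ^ (m+1) / (Nat.factorial (m+1)) := hm ▸ hAK
      have h2 : (K:ℝ) * binAbs β K / β ≤ β ^ m / (Nat.factorial m) := by
        rw [hm]
        have heq : ((m + 1 : ℕ):ℝ) * (β ^ (m+1) / (Nat.factorial (m+1))) / β
            = β ^ m / (Nat.factorial m) := by
          rw [Nat.factorial_succ]
          have hfm : (0:ℝ) < (Nat.factorial m : ℝ) := by positivity
          push_cast
          field_simp
          ring
        have hb : 0 ≤ binAbs β (m+1) := binAbs_nonneg β (m+1)
        rw [← heq]
        gcongr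
      exact h1.trans (h2.trans (my_pow_div_factorial_le_exp β hβ.le m))
    have htot : ∑ k ∈ Finset.range n, binAbs β (N + 1 + k) ≤ 2 * Real.exp β := by
      rw [hsplit] at hstep1
      linarith
    have hfin : 2 * Real.exp β ≤ Real.exp (β ^ 2 + β) / (β * (N:ℝ) ^ β) := by
      rw [le_div_iff₀ (by positivity)]
      have hNleβ : (N:ℝ) ≤ β := by linarith
      have hrpow : (N:ℝ) ^ β ≤ Real.exp (Real.log β * β) := by
        rw [← Real.rpow_def_of_pos hβ]
        exact Real.rpow_le_rpow hNpos.le hNleβ hβ.le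
      have h2e : (2:ℝ) ≤ Real.exp 1 := by
        have := Real.add_one_le_exp 1; linarith
      have hβ1 : (1:ℝ) < β := by linarith
      have hlog : Real.log β ≤ β - 1 := by
        have := Real.log_le_sub_one_of_pos hβ; linarith
      have hlog0 : 0 ≤ Real.log β := Real.log_nonneg hβ1.le
      calc 2 * Real.exp β * (β * (N:ℝ) ^ β)
          ≤ Real.exp 1 * Real.exp β * (Real.exp (Real.log β) * Real.exp (Real.log β * β)) := by
            rw [Real.exp_log hβ]
            have hp1 : 2 * (N:ℝ) ^ β ≤ Real.exp 1 * Real.exp (Real.log β * β) :=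
              mul_le_mul h2e hrpow hNβpos.le (Real.exp_pos 1).le
            nlinarith [mul_pos (Real.exp_pos β) hβ]
      _ ≤ Real.exp (β ^ 2 + β) := by
            rw [← Real.exp_add, ← Real.exp_add, ← Real.exp_add]
            apply Real.exp_le_exp.2
            nlinarith
    exact htot.trans hfin

/-- Tail bound for the series of absolute values of generalized binomial coefficients:
`Σ_{p=N+1}^∞ |C(β,p)| ≤ e^{β²+β}/(β N^β)`, where `C(β,p) = β(β-1)⋯(β-p+1)/p!`.
The tail is written via the shift `p = N+1+k`. -/
theorem tsum_abs_generalized_binomial_tail_le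
    (β : ℝ) (hβ : 0 < β) (N : ℕ) (hN : 1 ≤ N) :
    Summable (fun k : ℕ =>
      |(∏ j ∈ Finset.range (N + 1 + k), (β - j)) / (Nat.factorial (N + 1 + k))|) ∧
    ∑' k : ℕ,
      |(∏ j ∈ Finset.range (N + 1 + k), (β - j)) / (Nat.factorial (N + 1 + k))| ≤
      Real.exp (β ^ 2 + β) / (β * (N : ℝ) ^ β) := by
  have hfk : (fun k : ℕ =>
      |(∏ j ∈ Finset.range (N + 1 + k), (β - j)) / (Nat.factorial (N + 1 + k))|)
      = fun k : ℕ => binAbs β (N + 1 + k) := by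
    funext k
    unfold binAbs
    rw [abs_div, Nat.abs_cast]
  rw [hfk]
  constructor
  · exact summable_of_sum_range_le (fun k => binAbs_nonneg β _)
      (fun n => partial_sum_le β hβ N hN n)
  · exact Real.tsum_le_of_sum_range_le (fun k => binAbs_nonneg β _)
      (fun n => partial_sum_le β hβ N hN n)
end
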